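/- If (α, β) ∈ ℝ² satisfies β² − α² < (c₁/c) k a_θ α ≤ α² + β² (the region 𝒱_T; note that this forces α ≠ 0), then Q_T^θ(α, β) = c(α² + β²)²/α² + 2 c₁ k (a_θ (α² − β²)/α − 2 b_θ β) + 2 c₁ k² + ē_T, and the infimum defining Q_T^θ(α, β) is attained at γ = β²/α. -/

import Mathlib

/-- Twist-case context: `c = c₁ + c₂`, `aθ = cos 2θ`, `bθ = sin 2θ`,
`f α β γ = c(α² + 2β² + γ²) + 2c|αγ − β²| + 2c₁ k aθ (α − γ) − 4c₁ k bθ β + 2c₁k² + ē_T`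
and `Q α β = ⨅ γ, f α β γ`. -/
theorem stmt2 (c₁ c₂ k θ eT : ℝ) (hc₁ : 0 < c₁) (hc₂ : 0 < c₂)
    (hθ : 0 ≤ θ ∧ θ < Real.pi) (heT : 0 ≤ eT)
    (c aθ bθ : ℝ) (hc : c = c₁ + c₂)
    (haθ : aθ = Real.cos (2 * θ)) (hbθ : bθ = Real.sin (2 * θ))
    (f : ℝ → ℝ → ℝ → ℝ)
    (hf : ∀ α β γ : ℝ, f α β γ =
      c * (α ^ 2 + 2 * β ^ 2 + γ ^ 2) + 2 * c * |α * γ - β ^ 2|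
        + 2 * c₁ * k * aθ * (α - γ) - 4 * c₁ * k * bθ * β + 2 * c₁ * k ^ 2 + eT)
    (Q : ℝ → ℝ → ℝ) (hQ : ∀ α β : ℝ, Q α β = ⨅ γ : ℝ, f α β γ)
    (α β : ℝ) (hreg₁ : β ^ 2 - α ^ 2 < (c₁ / c) * k * aθ * α)
    (hreg₂ : (c₁ / c) * k * aθ * α ≤ α ^ 2 + β ^ 2) :
    α ≠ 0 ∧
    Q α β = c * (α ^ 2 + β ^ 2) ^ 2 / α ^ 2
      + 2 * c₁ * k * (aθ * (α ^ 2 - β ^ 2) / α - 2 * bθ * β) + 2 * c₁ * k ^ 2 + eT ∧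
    f α β (β ^ 2 / α) = Q α β := by
  have hcpos : 0 < c := by rw [hc]; linarith
  have hcne : c ≠ 0 := ne_of_gt hcpos
  have hα : α ≠ 0 := by
    intro h; rw [h] at hreg₁ hreg₂
    simp at hreg₁
    nlinarith [sq_nonneg β]
  have hα2 : (0:ℝ) < α ^ 2 := by positivity
  -- the regionality inequalities multiplied by c
  have e : (c₁ / c) * k * aθ * α * c = c₁ * k * aθ * α := by field_simp
  have r1 : c * β ^ 2 - c * α ^ 2 ≤ c₁ * k * aθ * α := by
    have h := mul_lt_mul_of_pos_right hreg₁ hcpos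
    rw [e] at h; nlinarith
  have r2 : c₁ * k * aθ * α ≤ c * α ^ 2 + c * β ^ 2 := by
    have h := mul_le_mul_of_nonneg_right hreg₂ hcpos.le
    rw [e] at h; nlinarith
  have hd : α * (β ^ 2 / α) = β ^ 2 := by field_simp
  have h0 : |α * (β ^ 2 / α) - β ^ 2| = 0 := by rw [hd]; simp
  have key : ∀ γ : ℝ, f α β (β ^ 2 / α) ≤ f α β γ := by
    intro γ
    rw [hf, hf, h0]
    set d := β ^ 2 / α with hdd
    have h1 : α * γ - β ^ 2 ≤ |α * γ - β ^ 2| := le_abs_self _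
    have h2 : -(α * γ - β ^ 2) ≤ |α * γ - β ^ 2| := neg_le_abs _
    have key2 : c * β ^ 4 - 2 * c₁ * k * aθ * α * β ^ 2 ≤
        (c * γ ^ 2 + 2 * c * |α * γ - β ^ 2| - 2 * c₁ * k * aθ * γ) * α ^ 2 := by
      rcases le_or_gt 0 (α * γ - β ^ 2) with hv | hv
      · nlinarith [mul_nonneg hcpos.le (sq_nonneg (α * γ - β ^ 2)),
          mul_nonneg hv (sub_nonneg.2 r2),
          mul_nonneg (mul_nonneg hcpos.le hα2.le) (sub_nonneg.2 h1)]
      · nlinarith [mul_nonneg hcpos.le (sq_nonneg (α * γ - β ^ 2)),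
          mul_nonneg (neg_nonneg.2 hv.le) (sub_nonneg.2 r1),
          mul_nonneg (mul_nonneg hcpos.le hα2.le) (sub_nonneg.2 h2)]
    have lhs_eq : (c * d ^ 2 - 2 * c₁ * k * aθ * d) * α ^ 2
        = c * β ^ 4 - 2 * c₁ * k * aθ * α * β ^ 2 := by
      rw [hdd]; field_simp
    rw [← lhs_eq] at key2
    have key3 := le_of_mul_le_mul_right key2 hα2
    linarith [key3]
  have hbdd : BddBelow (Set.range fun γ : ℝ => f α β γ) :=
    ⟨f α β (β ^ 2 / α), by rintro x ⟨γ, rfl⟩; exact key γ⟩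
  have hQeq : Q α β = f α β (β ^ 2 / α) := by
    rw [hQ]
    exact le_antisymm (ciInf_le hbdd _) (le_ciInf key)
  refine ⟨hα, ?_, hQeq.symm⟩
  rw [hQeq, hf, h0]
  field_simp
  ring
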